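/- arXiv:2504.15662 — 3 statements merged into one kernel-verified Lean document; each statement's English description precedes it below -/
import Mathlib

section
/- Let Φ be an automorphism of an effective abstract GKM graph (Γ,α) (with compatible linear map Ψ) that preserves a fixed compatible connection ∇. Then Φ is uniquely determined by its value on a single vertex v and on all edges emanating from v; i.e., if two such connection-preserving automorphisms agree on v and on E(Γ)_v, they are equal. -/
/-- An abstract GKM graph: a finite graph (each edge appearing with both
orientations, no loops) with edges labelled by elements of `ℤ^m/±1`, represented by
a choice of lift `label : E → ℤ^m` well defined up to sign. -/
structure GKMGraph (m : ℕ) where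
  V : Type
  E : Type
  fintV : Fintype V
  fintE : Fintype E
  src : E → V
  bar : E → E
  bar_invol : ∀ e, bar (bar e) = e
  no_loops : ∀ e, src (bar e) ≠ src e
  label : E → (Fin m → ℤ)
  label_bar : ∀ e, label (bar e) = label e ∨ label (bar e) = - label e

namespace GKMGraph

variable {m : ℕ} (Γ : GKMGraph m)

/-- The terminal vertex of an (oriented) edge. -/
def tgt (e : Γ.E) : Γ.V := Γ.src (Γ.bar e)

/-- Connectivity of the graph. -/
def Connected : Prop :=
  ∀ v w : Γ.V, Relation.ReflTransGen (fun a b => ∃ e, Γ.src e = a ∧ Γ.tgt e = b) v w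

/-- The label of an edge, viewed with rational coefficients. -/
def labelℚ (e : Γ.E) : Fin m → ℚ := fun i => (Γ.label e i : ℚ)

/-- A connection on a GKM graph compatible with the axial function: a family of
bijections `∇_e : E_{i(e)} → E_{t(e)}` with `∇_e e = ē`, `∇_{ē} = ∇_e⁻¹`, and
`α(∇_e f) = ± α(f) + c α(e)`. -/
structure Connection where
  conn : Γ.E → Γ.E → Γ.E
  conn_self : ∀ e, conn e e = Γ.bar e
  conn_src : ∀ e f, Γ.src f = Γ.src e → Γ.src (conn e f) = Γ.tgt e
  conn_inv : ∀ e f, Γ.src f = Γ.src e → conn (Γ.bar e) (conn e f) = f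
  compat : ∀ e f, Γ.src f = Γ.src e →
    ∃ ε c : ℤ, (ε = 1 ∨ ε = -1) ∧ Γ.label (conn e f) = ε • Γ.label f + c • Γ.label e

/-- An automorphism of the GKM graph `Γ`: an automorphism of the underlying graph
together with a linear isomorphism `Ψ : ℤ^m → ℤ^m` with `α(Φ(e)) = Ψ(α(e))`
(as elements of `ℤ^m/±1`). -/
structure Aut where
  vmap : Γ.V ≃ Γ.V
  emap : Γ.E ≃ Γ.E
  lin : (Fin m → ℤ) ≃ₗ[ℤ] (Fin m → ℤ)
  src_comm : ∀ e, Γ.src (emap e) = vmap (Γ.src e)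
  bar_comm : ∀ e, emap (Γ.bar e) = Γ.bar (emap e)
  label_comm : ∀ e, Γ.label (emap e) = lin (Γ.label e) ∨ Γ.label (emap e) = - lin (Γ.label e)

end GKMGraph

/-- An automorphism preserves a connection if `Φ(∇_e f) = ∇_{Φ(e)} Φ(f)`. -/
def GKMGraph.Aut.Preserves {m : ℕ} {Γ : GKMGraph m} (Φ : Γ.Aut) (C : Γ.Connection) : Prop :=
  ∀ e f, Γ.src f = Γ.src e → Φ.emap (C.conn e f) = C.conn (Φ.emap e) (Φ.emap f)

/-- Any automorphism of an effective abstract GKM graph (the labels at every vertex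
span all of `ℚ^m`, and at every vertex the labels of distinct edges are linearly
independent) which preserves a compatible connection `∇` is uniquely determined by
its value on one vertex `v` and on all edges emanating from `v`: two such
connection-preserving automorphisms agreeing there are equal. -/
theorem stmt_0 {m : ℕ} (Γ : GKMGraph m) (hconn : Γ.Connected)
    (heff : ∀ v : Γ.V,
      Submodule.span ℚ {x : Fin m → ℚ | ∃ e, Γ.src e = v ∧ x = Γ.labelℚ e} = ⊤)
    (hGKM : ∀ e f : Γ.E, Γ.src e = Γ.src f → e ≠ f →
      LinearIndependent ℚ ![Γ.labelℚ e, Γ.labelℚ f])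
    (C : Γ.Connection) (Φ₁ Φ₂ : Γ.Aut)
    (h₁ : Φ₁.Preserves C) (h₂ : Φ₂.Preserves C)
    (v : Γ.V) (hv : Φ₁.vmap v = Φ₂.vmap v)
    (he : ∀ e, Γ.src e = v → Φ₁.emap e = Φ₂.emap e) :
    Φ₁.vmap = Φ₂.vmap ∧ Φ₁.emap = Φ₂.emap := by
  have key : ∀ w, Φ₁.vmap w = Φ₂.vmap w ∧ ∀ g, Γ.src g = w → Φ₁.emap g = Φ₂.emap g := by
    intro w
    induction hconn v w with
    | refl => exact ⟨hv, he⟩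
    | tail hab hstep ih =>
      obtain ⟨e, hse, hte⟩ := hstep
      obtain ⟨ihv, ihe⟩ := ih
      have hee : Φ₁.emap e = Φ₂.emap e := ihe e hse
      have hgen : ∀ g, Γ.src g = Γ.tgt e → Φ₁.emap g = Φ₂.emap g := by
        intro g hg
        have hg' : Γ.src g = Γ.src (Γ.bar e) := hg
        set f := C.conn (Γ.bar e) g with hf
        have hsf : Γ.src f = Γ.src e := by
          have := C.conn_src (Γ.bar e) g hg'
          simpa [GKMGraph.tgt, Γ.bar_invol] using this
        have hgf : C.conn e f = g := by
          have := C.conn_inv (Γ.bar e) g hg'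
          rwa [Γ.bar_invol] at this
        have hff : Φ₁.emap f = Φ₂.emap f := ihe f (hsf.trans hse)
        calc Φ₁.emap g = Φ₁.emap (C.conn e f) := by rw [hgf]
          _ = C.conn (Φ₁.emap e) (Φ₁.emap f) := h₁ e f hsf
          _ = C.conn (Φ₂.emap e) (Φ₂.emap f) := by rw [hee, hff]
          _ = Φ₂.emap (C.conn e f) := (h₂ e f hsf).symm
          _ = Φ₂.emap g := by rw [hgf]
      refine ⟨?_, fun g hg => hgen g (by rw [hg, hte])⟩
      subst hte
      have t1 : Φ₁.vmap (Γ.tgt e) = Γ.tgt (Φ₁.emap e) := by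
        show Φ₁.vmap (Γ.src (Γ.bar e)) = Γ.src (Γ.bar (Φ₁.emap e))
        rw [← Φ₁.bar_comm, Φ₁.src_comm]
      have t2 : Φ₂.vmap (Γ.tgt e) = Γ.tgt (Φ₂.emap e) := by
        show Φ₂.vmap (Γ.src (Γ.bar e)) = Γ.src (Γ.bar (Φ₂.emap e))
        rw [← Φ₂.bar_comm, Φ₂.src_comm]
      rw [t1, t2, hee]
  exact ⟨Equiv.ext fun w => (key w).1, Equiv.ext fun g => (key (Γ.src g)).2 g rfl⟩
end

section
/- Type 2 automorphisms of the GKM graph Γ of G/T preserve the canonical connection: if ψ: G → G is an automorphism with ψ(T) = T, and Φ is defined on vertices by [w] ↦ [ψ(w)] and sends the edge joining [w] and [wσ_α] to the edge joining [ψ(w)] and [ψ(w)σ_{α∘dψ^{-1}}], then Φ(∇_e f) = ∇_{Φ(e)} Φ(f) for all adjacent edges e, f. -/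
/-!  Combinatorial model of the GKM graph of `G/T`: vertices are the elements of the
Weyl group `W`, the edges emanating from a vertex `w` are indexed by the roots modulo
sign (an index type `R` together with the corresponding reflections `σ : R → W`), and
the edge `(w, a)` joins `w` and `w * σ a`.  The canonical connection sends the edge
`f = (w, b)` along `e = (w, a)` to the edge `(w * σ a, b)`. -/

/-- The canonical connection on the GKM graph of `G/T`. -/
def conn {W R : Type*} [Group W] (σ : R → W) (e f : W × R) : W × R :=
  (e.1 * σ e.2, f.2)

/-- The Type 2 automorphism induced by an automorphism `ψ : G → G` with `ψ(T) = T`: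
on the Weyl group it acts by the induced group automorphism `ψ : W → W`, and it
permutes the roots by `r : R ≃ R` (corresponding to `α ↦ α ∘ dψ⁻¹`), subject to
`σ_{r a} = ψ (σ a)`.  On edges it sends the edge joining `[w]` and `[wσ_α]` to the
edge joining `[ψ(w)]` and `[ψ(w) σ_{α∘dψ⁻¹}]`. -/
def typeTwoEdge {W R : Type*} [Group W] (ψ : W ≃* W) (r : R ≃ R) (e : W × R) : W × R :=
  (ψ e.1, r e.2)

/-- Type 2 automorphisms of the GKM graph of `G/T` preserve the canonical connection:
`Φ(∇_e f) = ∇_{Φ(e)} Φ(f)` for all edges `e, f` emanating from the same vertex. -/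
theorem stmt_6 {W R : Type*} [Group W] (σ : R → W) (ψ : W ≃* W) (r : R ≃ R)
    (hr : ∀ a, σ (r a) = ψ (σ a)) (e f : W × R) (hef : f.1 = e.1) :
    typeTwoEdge ψ r (conn σ e f) = conn σ (typeTwoEdge ψ r e) (typeTwoEdge ψ r f) := by
  simp [typeTwoEdge, conn, hr, map_mul]
end

section
/- Let Γ be any abstract GKM graph. For each unoriented edge e ∈ E(Γ), let S_e be the subgraph consisting of e and its two adjacent vertices. Then the map H²(Γ) → ⊕_{e∈E(Γ)} H²(S_e) induced by the inclusions is injective. -/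
namespace GKMGraph

variable {m : ℕ} (Γ : GKMGraph m)

/-- Membership in the degree-two part of the equivariant graph cohomology
`H²_T(Γ)`: a tuple of degree-two classes satisfying the divisibility condition
`f_{i(e)} ≡ f_{t(e)} mod α(e)` along every edge. -/
def IsCocycle (x : Γ.V → (Fin m → ℤ)) : Prop :=
  ∀ e : Γ.E, ∃ c : ℤ, x (Γ.tgt e) - x (Γ.src e) = c • Γ.label e

end GKMGraph

/-- For a GKM graph `Γ` and an edge `e`, let `S_e` be the subgraph consisting of `e`
and its two adjacent vertices.  The map `H²(Γ) → ⊕_{e} H²(S_e)` induced by the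
inclusions is injective.  Concretely: `H²` is the quotient of the degree-two
equivariant classes by the constant tuples, and two classes `x, y ∈ H²_T(Γ)` have
the same image in `H²(S_e)` for every edge `e` exactly when for each `e` they differ
by a constant on the two endpoints of `e`; the conclusion is that then `x` and `y`
differ globally by a constant, i.e. define the same class in `H²(Γ)`. -/
theorem stmt_9 {m : ℕ} (Γ : GKMGraph m) (hconn : Γ.Connected)
    (x y : Γ.V → (Fin m → ℤ)) (hx : Γ.IsCocycle x) (hy : Γ.IsCocycle y)
    (hloc : ∀ e : Γ.E, ∃ β : Fin m → ℤ,
      x (Γ.src e) = y (Γ.src e) + β ∧ x (Γ.tgt e) = y (Γ.tgt e) + β) :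
    ∃ β : Fin m → ℤ, ∀ v : Γ.V, x v = y v + β := by
  have step : ∀ a b : Γ.V, (∃ e, Γ.src e = a ∧ Γ.tgt e = b) → x a - y a = x b - y b := by
    rintro a b ⟨e, rfl, rfl⟩
    obtain ⟨β, h1, h2⟩ := hloc e
    rw [h1, h2]; abel
  have hconst : ∀ a b : Γ.V, x a - y a = x b - y b := by
    intro a b
    induction hconn a b with
    | refl => rfl
    | tail _ h ih => exact ih.trans (step _ _ h)
  rcases isEmpty_or_nonempty Γ.V with h | hne
  · exact ⟨0, fun v => (h.false v).elim⟩
  · obtain ⟨v0⟩ := hne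
    refine ⟨x v0 - y v0, fun v => ?_⟩
    have := hconst v v0
    linear_combination (norm := abel) this
end
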